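/- Let $0<p_1\le u_1<\infty$ and $0<p_2\le u_2<\infty$ with $u_1\le u_2$ and $p_2/u_2\le p_1/u_1$ (so that the inclusion $m_{u_1,p_1}(\mathbb{Z}^d)\subset m_{u_2,p_2}(\mathbb{Z}^d)$ is continuous). Then the embedding operator $m_{u_1,p_1}(\mathbb{Z}^d)\hookrightarrow m_{u_2,p_2}(\mathbb{Z}^d)$ is never compact: the image of the closed unit ball of $m_{u_1,p_1}$ is not relatively compact in $m_{u_2,p_2}$. -/
import Mathlib


open scoped ENNReal NNReal BigOperators
open Filter

/-- The unit cube `Q_{0,k}` is contained in the dyadic cube `Q_{-j,m}` of side length `2^j`. -/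
def inDyadic (d j : ℕ) (m k : Fin d → ℤ) : Prop :=
  ∀ i, 2 ^ j * m i ≤ k i ∧ k i < 2 ^ j * (m i + 1)

/-- The Morrey sequence space quasi-norm `‖λ | m_{u,p}(ℤ^d)‖`, with values in `ℝ≥0∞`. -/
noncomputable def morreyNorm (d : ℕ) (u p : ℝ) (lam : (Fin d → ℤ) → ℂ) : ℝ≥0∞ :=
  ⨆ (j : ℕ) (m : Fin d → ℤ),
    ((2 : ℝ≥0∞) ^ (j * d)) ^ (1 / u - 1 / p) *
      (∑' k : {k : Fin d → ℤ // inDyadic d j m k}, (‖lam k.1‖₊ : ℝ≥0∞) ^ p) ^ (1 / p)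

/-- The `ℓ_r(ℤ^d)` norm. -/
noncomputable def lpNorm (d : ℕ) (r : ℝ) (lam : (Fin d → ℤ) → ℂ) : ℝ≥0∞ :=
  (∑' k : Fin d → ℤ, (‖lam k‖₊ : ℝ≥0∞) ^ r) ^ (1 / r)

/-- The `ℓ_∞(ℤ^d)` norm. -/
noncomputable def lInftyNorm (d : ℕ) (lam : (Fin d → ℤ) → ℂ) : ℝ≥0∞ :=
  ⨆ k : Fin d → ℤ, (‖lam k‖₊ : ℝ≥0∞)

/-- The weak Lorentz `ℓ_{u,∞}(ℤ^d)` norm, via the distribution function. -/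
noncomputable def weakNorm (d : ℕ) (u : ℝ) (lam : (Fin d → ℤ) → ℂ) : ℝ≥0∞ :=
  ⨆ t : ℝ≥0, (t : ℝ≥0∞) *
    (∑' _ : {k : Fin d → ℤ // (t : ℝ) < ‖lam k‖}, (1 : ℝ≥0∞)) ^ (1 / u)

/-- The norm of the level-`j` space `X^{(j)}_{u,p}(ℤ^d)`. -/
noncomputable def XjNorm (d : ℕ) (u p p' : ℝ) (j : ℕ) (lam : (Fin d → ℤ) → ℂ) : ℝ≥0∞ :=
  ((2 : ℝ≥0∞) ^ (j * d)) ^ (1 / p - 1 / u) *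
    ∑' m : Fin d → ℤ,
      (∑' k : {k : Fin d → ℤ // inDyadic d j m k}, (‖lam k.1‖₊ : ℝ≥0∞) ^ p') ^ (1 / p')

/-- The norm of `X_{u,p}(ℤ^d)`: infimum over decompositions `λ = ∑_j λ^{(j)}`. -/
noncomputable def XupNorm (d : ℕ) (u p p' : ℝ) (lam : (Fin d → ℤ) → ℂ) : ℝ≥0∞ :=
  ⨅ (L : ℕ → (Fin d → ℤ) → ℂ) (_ : ∀ k, HasSum (fun j => L j k) (lam k)),
    ∑' j : ℕ, XjNorm d u p p' j (L j)

/-- Membership in `m_{u,p}(ℤ^d)`. -/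
def MemMorrey (d : ℕ) (u p : ℝ) (lam : (Fin d → ℤ) → ℂ) : Prop :=
  morreyNorm d u p lam ≠ ⊤

/-- Membership in `m^{00}_{u,p}(ℤ^d)`, the closure of the finitely supported sequences. -/
def MemMorrey00 (d : ℕ) (u p : ℝ) (lam : (Fin d → ℤ) → ℂ) : Prop :=
  MemMorrey d u p lam ∧
    ∀ ε : ℝ≥0∞, 0 < ε → ∃ mu : (Fin d → ℤ) → ℂ,
      (Function.support mu).Finite ∧ morreyNorm d u p (lam - mu) < ε

/-- `Q_{-ν,m} ⊆ Q_{-j,0}` for dyadic cubes. -/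
def subCube (d j ν : ℕ) (m : Fin d → ℤ) : Prop :=
  ν ≤ j ∧ ∀ i, 0 ≤ m i ∧ 2 ^ ν * (m i + 1) ≤ 2 ^ j

/-- Norm of the finite-dimensional Morrey space `m^{2^{jd}}_{u,p}` on the cube `Q_{-j,0}`. -/
noncomputable def finMorreyNorm (d : ℕ) (u p : ℝ) (j : ℕ) (lam : (Fin d → ℤ) → ℂ) : ℝ≥0∞ :=
  ⨆ (ν : ℕ) (m : Fin d → ℤ) (_ : subCube d j ν m),
    ((2 : ℝ≥0∞) ^ (ν * d)) ^ (1 / u - 1 / p) *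
      (∑' k : {k : Fin d → ℤ // inDyadic d ν m k}, (‖lam k.1‖₊ : ℝ≥0∞) ^ p) ^ (1 / p)

/-- Operator norm of `id_j : m^{2^{jd}}_{u₁,p₁} → m^{2^{jd}}_{u₂,p₂}`. -/
noncomputable def morreyOpNorm (d : ℕ) (u₁ p₁ u₂ p₂ : ℝ) (j : ℕ) : ℝ≥0∞ :=
  ⨆ (lam : (Fin d → ℤ) → ℂ) (_ : finMorreyNorm d u₁ p₁ j lam ≤ 1),
    finMorreyNorm d u₂ p₂ j lam

theorem morrey_embedding_never_compact (d : ℕ) (hd : 0 < d) (u₁ p₁ u₂ p₂ : ℝ)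
    (hp₁ : 0 < p₁) (hpu₁ : p₁ ≤ u₁) (hp₂ : 0 < p₂) (hpu₂ : p₂ ≤ u₂)
    (hu : u₁ ≤ u₂) (hr : p₂ / u₂ ≤ p₁ / u₁) :
    ∃ ε : ℝ≥0∞, 0 < ε ∧ ∃ f : ℕ → (Fin d → ℤ) → ℂ,
      (∀ n, morreyNorm d u₁ p₁ (f n) ≤ 1) ∧
      ∀ n m : ℕ, n ≠ m → ε ≤ morreyNorm d u₂ p₂ (f n - f m) := by
  have hu₁ : (0:ℝ) < u₁ := lt_of_lt_of_le hp₁ hpu₁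
  set e : ℕ → (Fin d → ℤ) := fun n _ => (n : ℤ) with he
  have he_inj : Function.Injective e := by
    intro n m h
    have := congrFun h ⟨0, hd⟩
    simp only [he] at this
    exact_mod_cast this
  refine ⟨1, one_pos, fun n k => if k = e n then 1 else 0, ?_, ?_⟩
  · -- upper bound
    intro n
    refine iSup₂_le fun j m => ?_
    refine mul_le_one' ?_ ?_
    · calc ((2:ℝ≥0∞) ^ (j*d)) ^ (1/u₁ - 1/p₁) ≤ ((2:ℝ≥0∞) ^ (j*d)) ^ (0:ℝ) := by
            refine ENNReal.rpow_le_rpow_of_exponent_le (one_le_pow_of_one_le' one_le_two _) ?_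
            have : 1/u₁ ≤ 1/p₁ := one_div_le_one_div_of_le hp₁ hpu₁
            linarith
        _ = 1 := ENNReal.rpow_zero
    · have hS : (∑' k : {k : Fin d → ℤ // inDyadic d j m k},
          (‖(if k.1 = e n then (1:ℂ) else 0)‖₊ : ℝ≥0∞) ^ p₁) ≤ 1 := by
        calc (∑' k : {k : Fin d → ℤ // inDyadic d j m k},
              (‖(if k.1 = e n then (1:ℂ) else 0)‖₊ : ℝ≥0∞) ^ p₁)
            ≤ ∑' k : Fin d → ℤ, (‖(if k = e n then (1:ℂ) else 0)‖₊ : ℝ≥0∞) ^ p₁ :=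
              ENNReal.tsum_comp_le_tsum_of_injective Subtype.val_injective
                (fun k => (‖(if k = e n then (1:ℂ) else 0)‖₊ : ℝ≥0∞) ^ p₁)
          _ = 1 := by
              rw [tsum_eq_single (e n)]
              · simp
              · intro b hb
                simp [hb, ENNReal.zero_rpow_of_pos hp₁]
      calc _ ≤ (1:ℝ≥0∞) ^ (1/p₁) := ENNReal.rpow_le_rpow hS (by positivity)
        _ = 1 := ENNReal.one_rpow _
  · -- lower bound
    intro n m hnm
    have hne : e n ≠ e m := fun h => hnm (he_inj h)
    have hin : inDyadic d 0 (e n) (e n) := by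
      intro i; constructor <;> simp
    have hval : ((fun k => if k = e n then (1:ℂ) else 0) - fun k => if k = e m then (1:ℂ) else 0)
        (e n) = 1 := by
      simp [Pi.sub_apply, hne]
    have hS : (1:ℝ≥0∞) ≤ ∑' k : {k : Fin d → ℤ // inDyadic d 0 (e n) k},
        (‖(((fun k => if k = e n then (1:ℂ) else 0) - fun k => if k = e m then (1:ℂ) else 0))
          k.1‖₊ : ℝ≥0∞) ^ p₂ := by
      have := ENNReal.le_tsum (f := fun k : {k : Fin d → ℤ // inDyadic d 0 (e n) k} =>
        (‖(((fun k => if k = e n then (1:ℂ) else 0) - fun k => if k = e m then (1:ℂ) else 0))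
          k.1‖₊ : ℝ≥0∞) ^ p₂) ⟨e n, hin⟩
      simpa [hval] using this
    have hterm : (1:ℝ≥0∞) ≤ ((2:ℝ≥0∞) ^ (0*d)) ^ (1/u₂ - 1/p₂) *
        (∑' k : {k : Fin d → ℤ // inDyadic d 0 (e n) k},
          (‖(((fun k => if k = e n then (1:ℂ) else 0) - fun k => if k = e m then (1:ℂ) else 0))
            k.1‖₊ : ℝ≥0∞) ^ p₂) ^ (1/p₂) := by
      have h2 : ((2:ℝ≥0∞) ^ (0*d)) ^ (1/u₂ - 1/p₂) = 1 := by
        norm_num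
      rw [h2, one_mul]
      calc (1:ℝ≥0∞) = 1 ^ (1/p₂) := (ENNReal.one_rpow _).symm
        _ ≤ _ := ENNReal.rpow_le_rpow hS (by positivity)
    refine hterm.trans ?_
    exact le_iSup₂_of_le 0 (e n) le_rfl
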